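/- For every integer n ≥ 1, Σ_{T ∈ 𝒜_n} ∏_{v internal vertex of T} (h_v + 1) = (n+1)^{n−1}, where the sum is over all André trees on n vertices. -/

import Mathlib

open scoped Classical

noncomputable section

/-- An André tree on `n` vertices, encoded by its parent map `p` on `Fin n`
(vertex `i` stands for label `i+1`): every non-root vertex points to a strictly
larger parent, the root (label `n`) is a fixed point by convention, and each
vertex has at most two children. -/
def IsAndreTree (n : ℕ) (p : Fin n → Fin n) : Prop :=
  (∀ i : Fin n, (i : ℕ) + 1 < n → (i : ℕ) < (p i : ℕ)) ∧
  (∀ i : Fin n, ¬ (i : ℕ) + 1 < n → p i = i) ∧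
  ∀ j : Fin n, (Finset.univ.filter fun i : Fin n => (i : ℕ) + 1 < n ∧ p i = j).card ≤ 2

/-- The set of André trees on `n` vertices. -/
def andreTrees (n : ℕ) : Finset (Fin n → Fin n) :=
  Finset.univ.filter (IsAndreTree n)

/-- The hook length of the vertex `v`: the number of vertices in the subtree
rooted at `v`, i.e. the number of vertices `w` having `v` as an ancestor. -/
def hookA (n : ℕ) (p : Fin n → Fin n) (v : Fin n) : ℕ :=
  (Finset.univ.filter fun w : Fin n => ∃ k < n, p^[k] w = v).card

/-- The set of internal vertices, i.e. vertices with hook length `> 1`. -/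
def internalsA (n : ℕ) (p : Fin n → Fin n) : Finset (Fin n) :=
  Finset.univ.filter fun v => 1 < hookA n p v

end


section AbelIdentity
open Polynomial Finset

open Polynomial Finset

lemma finDiff : ∀ (n : ℕ) (q : Polynomial ℚ), q.degree < n →
    ∑ k ∈ range (n+1), (-1:ℚ)^k * (n.choose k) * q.eval (k : ℚ) = 0 := by
  intro n
  induction n with
  | zero =>
    intro q hq
    have : q = 0 := by
      by_contra h
      exact absurd hq (not_lt.2 (by simpa using Polynomial.zero_le_degree_iff.2 h))
    simp [this]
  | succ n ih =>
    intro q hq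
    set Δ : Polynomial ℚ := q.comp (X + 1) - q with hΔ
    have hΔdeg : Δ.degree < n := by
      rcases eq_or_ne q 0 with rfl | hq0
      · show ((0:ℚ[X]).comp (X+1) - 0).degree < (n : WithBot ℕ)
        simp
      · have hXD : (X + 1 : ℚ[X]).natDegree = 1 := by
          simpa using Polynomial.natDegree_X_add_C (1:ℚ)
        have hcomp0 : q.comp (X+1) ≠ 0 := by
          intro h
          apply hq0
          apply Polynomial.funext
          intro r
          have := congrArg (Polynomial.eval (r - 1)) h
          simp [Polynomial.eval_comp] at this
          simpa using this
        have hdc : (q.comp (X + 1)).degree = q.degree := by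
          rw [Polynomial.degree_eq_natDegree hcomp0, Polynomial.degree_eq_natDegree hq0,
            Polynomial.natDegree_comp, hXD, mul_one]
        have hlc : (q.comp (X+1)).leadingCoeff = q.leadingCoeff := by
          rw [Polynomial.leadingCoeff_comp (by rw [hXD]; exact one_ne_zero)]
          have : (X + 1 : ℚ[X]).leadingCoeff = 1 := by
            simpa using (Polynomial.monic_X_add_C (1:ℚ)).leadingCoeff
          rw [this, one_pow, mul_one]
        have hsub := Polynomial.degree_sub_lt hdc hcomp0 hlc
        rw [hdc] at hsub
        have hnd : q.natDegree ≤ n := by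
          rw [Polynomial.degree_eq_natDegree hq0] at hq
          exact Nat.lt_succ_iff.1 (by exact_mod_cast hq)
        calc Δ.degree < q.degree := hsub
          _ ≤ (n : WithBot ℕ) := by
              rw [Polynomial.degree_eq_natDegree hq0]; exact_mod_cast hnd
    have key := ih Δ hΔdeg
    have hΔeval : ∀ j : ℕ, Δ.eval (j:ℚ) = q.eval ((j:ℚ)+1) - q.eval (j:ℚ) := by
      intro j; simp [hΔ]
    have hsplit : ∑ k ∈ range (n+2), (-1:ℚ)^k * ((n+1).choose k) * q.eval (k:ℚ)
        = ∑ k ∈ range (n+1), (-1:ℚ)^k * (n.choose k) * q.eval (k:ℚ)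
          + ∑ k ∈ range (n+1), (-1:ℚ)^(k+1) * (n.choose k) * q.eval ((k:ℚ)+1) := by
      have h1 : ∀ k ∈ range (n+2), (-1:ℚ)^k * ((n+1).choose k) * q.eval (k:ℚ)
          = (-1:ℚ)^k * (n.choose k) * q.eval (k:ℚ)
            + (if k = 0 then 0 else (-1:ℚ)^k * (n.choose (k-1)) * q.eval (k:ℚ)) := by
        intro k _
        rcases k with _ | k
        · simp
        · have hch : (((n+1).choose (k+1)) : ℚ) = (n.choose (k+1) : ℚ) + (n.choose k : ℚ) := by
            rw [Nat.choose_succ_succ]; push_cast; ring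
          simp only [if_neg (Nat.succ_ne_zero k), Nat.add_sub_cancel]
          rw [hch]; ring
      rw [Finset.sum_congr rfl h1, Finset.sum_add_distrib]
      congr 1
      · rw [Finset.sum_range_succ]
        simp [Nat.choose_eq_zero_of_lt (Nat.lt_succ_self n)]
      · rw [Finset.sum_range_succ']
        simp
    rw [hsplit]
    have : ∑ k ∈ range (n+1), (-1:ℚ)^k * (n.choose k) * q.eval (k:ℚ)
          + ∑ k ∈ range (n+1), (-1:ℚ)^(k+1) * (n.choose k) * q.eval ((k:ℚ)+1)
        = - ∑ k ∈ range (n+1), (-1:ℚ)^k * (n.choose k) * Δ.eval (k:ℚ) := by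
      rw [← Finset.sum_add_distrib, ← Finset.sum_neg_distrib]
      apply Finset.sum_congr rfl
      intro k _
      rw [hΔeval k]; ring
    rw [this, key, neg_zero]

lemma abel_rat : ∀ (n : ℕ) (x y : ℚ),
    ∑ k ∈ range (n+1), (n.choose k : ℚ) * (if k = 0 then 1 else x*(x+k)^(k-1)) * (y + ((n-k : ℕ):ℚ))^(n-k)
      = (x+y+n)^n := by
  intro n
  induction n with
  | zero => intro x y; simp
  | succ n ih =>
    intro x y
    set c : ℕ → ℚ := fun k => if k = 0 then 1 else x*(x+k)^(k-1) with hc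
    set P : Polynomial ℚ :=
      ∑ k ∈ range (n+2), Polynomial.C (((n+1).choose k : ℚ) * c k) * (X + Polynomial.C (((n+1-k : ℕ):ℚ)))^(n+1-k) with hP
    set Q : Polynomial ℚ := (X + Polynomial.C (x + (n+1)))^(n+1) with hQ
    have hPeval : ∀ z : ℚ, P.eval z
        = ∑ k ∈ range (n+2), ((n+1).choose k : ℚ) * c k * (z + ((n+1-k : ℕ):ℚ))^(n+1-k) := by
      intro z; rw [hP]; simp [Polynomial.eval_finset_sum]
    have hQeval : ∀ z : ℚ, Q.eval z = (x + z + (n+1))^(n+1) := by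
      intro z; rw [hQ]; simp; ring_nf
    have hPQ : P = Q := by
      have hder : derivative P = derivative Q := by
        apply Polynomial.funext
        intro z
        have hdP : (derivative P).eval z
            = ∑ k ∈ range (n+2), ((n+1).choose k : ℚ) * c k * ((n+1-k : ℕ):ℚ) * (z + ((n+1-k : ℕ):ℚ))^(n+1-k-1) := by
          rw [hP, derivative_sum, Polynomial.eval_finset_sum]
          apply Finset.sum_congr rfl
          intro k _
          rw [derivative_C_mul, Polynomial.derivative_pow]
          simp
          ring
        have hdQ : (derivative Q).eval z = ((n+1:ℕ):ℚ) * (x + z + (n+1))^n := by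
          rw [hQ, Polynomial.derivative_pow]
          simp only [Polynomial.derivative_add, Polynomial.derivative_X, Polynomial.derivative_C,
            add_zero, Nat.add_sub_cancel, Polynomial.eval_mul, Polynomial.eval_pow,
            Polynomial.eval_add, Polynomial.eval_X, Polynomial.eval_C, Polynomial.eval_natCast,
            mul_one]
          push_cast; ring
        rw [hdP, hdQ]
        rw [Finset.sum_range_succ]
        simp only [Nat.sub_self, Nat.cast_zero, mul_zero, zero_mul, add_zero]
        have hterm : ∀ k ∈ range (n+1),
            ((n+1).choose k : ℚ) * c k * ((n+1-k : ℕ):ℚ) * (z + ((n+1-k : ℕ):ℚ))^(n+1-k-1)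
            = ((n+1:ℕ):ℚ) * ((n.choose k : ℚ) * c k * ((z+1) + ((n-k : ℕ):ℚ))^(n-k)) := by
          intro k hk
          have hkn : k ≤ n := Nat.lt_succ_iff.1 (Finset.mem_range.1 hk)
          have h1 : (n.choose k) * (n + 1) = ((n+1).choose k) * (n + 1 - k) :=
            Nat.choose_mul_succ_eq n k
          have h4 : n+1-k-1 = n-k := by omega
          have h5 : ((n+1-k : ℕ):ℚ) = ((n-k:ℕ):ℚ) + 1 := by
            have h : n+1-k = (n-k)+1 := by omega
            rw [h]; push_cast; ring
          rw [h4, h5]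
          have h6 : ((n+1).choose k : ℚ) * (((n-k:ℕ):ℚ)+1) = ((n+1:ℕ):ℚ) * (n.choose k : ℚ) := by
            have hcast := congrArg (Nat.cast : ℕ → ℚ) h1
            push_cast at hcast
            rw [h5] at hcast
            rw [← hcast]; push_cast; ring
          calc ((n+1).choose k : ℚ) * c k * (((n-k:ℕ):ℚ)+1) * ((z + (((n-k:ℕ):ℚ)+1)))^(n-k)
              = (((n+1).choose k : ℚ) * (((n-k:ℕ):ℚ)+1)) * (c k * ((z+1) + ((n-k:ℕ):ℚ))^(n-k)) := by
                ring_nf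
            _ = ((n+1:ℕ):ℚ) * ((n.choose k : ℚ) * c k * ((z+1) + ((n-k:ℕ):ℚ))^(n-k)) := by
                rw [h6]; ring
        rw [Finset.sum_congr rfl hterm, ← Finset.mul_sum, ih x (z+1)]
        push_cast
        ring_nf
      have hdiff : derivative (P - Q) = 0 := by rw [derivative_sub, hder, sub_self]
      have hdeg0 : (P - Q).natDegree = 0 := Polynomial.natDegree_eq_zero_of_derivative_eq_zero hdiff
      obtain ⟨a, ha⟩ := Polynomial.natDegree_eq_zero.1 hdeg0
      have hy0 : (P - Q).eval (-(x + (n+1))) = 0 := by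
        rw [Polynomial.eval_sub]
        have hQ0 : Q.eval (-(x + (n+1))) = 0 := by
          rw [hQeval]
          have : x + -(x + ((n:ℚ)+1)) + ((n:ℚ)+1) = 0 := by ring
          rw [this, zero_pow (Nat.succ_ne_zero n)]
        have hP0 : P.eval (-(x + (n+1))) = 0 := by
          rw [hPeval]
          have hterm : ∀ k ∈ range (n+2),
              ((n+1).choose k : ℚ) * c k * ((-(x + ((n:ℚ)+1))) + ((n+1-k : ℕ):ℚ))^(n+1-k)
              = x * ((-1:ℚ)^(n+1) * ((-1:ℚ)^k * ((n+1).choose k : ℚ) * ((Polynomial.C x + X : Polynomial ℚ)^n).eval (k:ℚ))) := by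
            intro k hk
            have hkn : k ≤ n+1 := Nat.lt_succ_iff.1 (Finset.mem_range.1 hk)
            have h7 : ((-(x + ((n:ℚ)+1))) + ((n+1-k : ℕ):ℚ)) = -(x + k) := by
              have h : ((n+1-k : ℕ):ℚ) = ((n:ℚ)+1) - (k:ℚ) := by
                rw [Nat.cast_sub hkn]; push_cast; ring
              rw [h]; ring
            rw [h7]
            have h8 : (-(x+(k:ℚ)))^(n+1-k) = (-1:ℚ)^(n+1-k) * (x+k)^(n+1-k) := by
              rw [neg_pow]
            have h9 : c k * (x+(k:ℚ))^(n+1-k) = x * (x+(k:ℚ))^n := by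
              rcases Nat.eq_zero_or_pos k with rfl | hk1
              · rw [hc]
                simp
                ring
              · rw [hc]
                simp only [if_neg (Nat.pos_iff_ne_zero.1 hk1)]
                rw [mul_assoc, ← pow_add]
                congr 2
                omega
            have h10 : (-1:ℚ)^(n+1-k) = (-1:ℚ)^(n+1) * (-1:ℚ)^k := by
              have hsum : n+1-k+(k+k) = n+1+k := by omega
              calc (-1:ℚ)^(n+1-k) = (-1:ℚ)^(n+1-k) * ((-1:ℚ)^(k+k)) := by
                    rw [← two_mul, pow_mul]; norm_num
                _ = (-1:ℚ)^(n+1+k) := by rw [← pow_add, hsum]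
                _ = (-1:ℚ)^(n+1) * (-1:ℚ)^k := by rw [pow_add]
            rw [h8, h10]
            simp only [Polynomial.eval_pow, Polynomial.eval_add, Polynomial.eval_C, Polynomial.eval_X]
            calc ((n+1).choose k : ℚ) * c k * ((-1:ℚ)^(n+1) * (-1:ℚ)^k * (x+(k:ℚ))^(n+1-k))
                = ((-1:ℚ)^(n+1) * ((-1:ℚ)^k * ((n+1).choose k : ℚ))) * (c k * (x+(k:ℚ))^(n+1-k)) := by ring
              _ = ((-1:ℚ)^(n+1) * ((-1:ℚ)^k * ((n+1).choose k : ℚ))) * (x * (x+(k:ℚ))^n) := by rw [h9]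
              _ = x * ((-1:ℚ)^(n+1) * ((-1:ℚ)^k * ((n+1).choose k : ℚ) * ((x:ℚ)+(k:ℚ))^n)) := by ring
          rw [Finset.sum_congr rfl hterm, ← Finset.mul_sum, ← Finset.mul_sum]
          have hdeg : ((Polynomial.C x + X : Polynomial ℚ)^n).degree < ((n+1 : ℕ) : WithBot ℕ) := by
            apply lt_of_le_of_lt (Polynomial.degree_pow_le _ _)
            have hd1 : (Polynomial.C x + X : Polynomial ℚ).degree ≤ 1 := by
              apply le_trans (Polynomial.degree_add_le _ _)
              simp only [Polynomial.degree_X, max_le_iff]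
              exact ⟨le_trans Polynomial.degree_C_le (by norm_num), le_refl 1⟩
            calc n • (Polynomial.C x + X : Polynomial ℚ).degree ≤ n • (1 : WithBot ℕ) :=
                  nsmul_le_nsmul_right hd1 n
              _ = (n : WithBot ℕ) := by simp
              _ < ((n+1:ℕ) : WithBot ℕ) := by exact_mod_cast Nat.lt_succ_self n
          have hfd := finDiff (n+1) ((Polynomial.C x + X : Polynomial ℚ)^n) hdeg
          rw [show n+1+1 = n+2 from rfl] at hfd
          rw [hfd]
          ring
        rw [hP0, hQ0, sub_self]
      rw [← ha] at hy0
      simp only [Polynomial.eval_C] at hy0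
      rw [hy0, map_zero] at ha
      have hfin : P = Q := by
        have := ha.symm
        rwa [sub_eq_zero] at this
      exact hfin
    have hEval := congrArg (Polynomial.eval y) hPQ
    rw [hPeval, hQeval] at hEval
    rw [hEval]
    push_cast
    ring

lemma abel_nat (M : ℕ) :
    ∑ j ∈ range (M+1), (M.choose j) * (j+2)^j * (M-j+1)^(M-j-1) = (M+3)^M := by
  set A : ℕ → ℚ := fun k =>
    (M.choose k : ℚ) * (if k = 0 then 1 else (1:ℚ)*((1:ℚ)+k)^(k-1)) * ((2:ℚ) + ((M-k : ℕ):ℚ))^(M-k) with hA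
  have key : ((∑ j ∈ range (M+1), (M.choose j) * (j+2)^j * (M-j+1)^(M-j-1) : ℕ) : ℚ)
      = (((M+3)^M : ℕ) : ℚ) := by
    calc ((∑ j ∈ range (M+1), (M.choose j) * (j+2)^j * (M-j+1)^(M-j-1) : ℕ) : ℚ)
        = ∑ j ∈ range (M+1), A (M - j) := by
          rw [Nat.cast_sum]
          apply Finset.sum_congr rfl
          intro j hj
          have hjM : j ≤ M := Nat.lt_succ_iff.1 (Finset.mem_range.1 hj)
          have e1 : M - (M - j) = j := by omega
          have e2 : M.choose (M - j) = M.choose j := Nat.choose_symm hjM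
          rw [hA]
          simp only [e1, e2]
          rcases eq_or_ne (M - j) 0 with hMj | hMj
          · rw [if_pos hMj, hMj]
            norm_num
            left
            ring
          · rw [if_neg hMj]
            push_cast
            ring
      _ = ∑ j ∈ range (M+1), A j := by
          have := Finset.sum_range_reflect A (M+1)
          simpa using this
      _ = (((M+3)^M : ℕ) : ℚ) := by
          rw [hA]
          have h := abel_rat M 1 2
          rw [h]
          push_cast
          ring
  exact Nat.cast_inj.1 key

end AbelIdentity

namespace AndreAux


/-- unbounded reachability -/
def Reach {n : ℕ} (p : Fin n → Fin n) (v w : Fin n) : Prop := ∃ k, p^[k] w = v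

lemma reach_self {n : ℕ} (p : Fin n → Fin n) (v : Fin n) : Reach p v v := ⟨0, rfl⟩

lemma reach_of_reach_apply {n : ℕ} (p : Fin n → Fin n) {v w : Fin n}
    (h : Reach p v (p w)) : Reach p v w := by
  obtain ⟨k, hk⟩ := h
  exact ⟨k+1, by rw [Function.iterate_succ_apply]; exact hk⟩

/-- If reachable at all, reachable within `n` steps. -/
lemma reach_bounded {n : ℕ} (p : Fin n → Fin n) {v w : Fin n} (h : Reach p v w) :
    ∃ k < n, p^[k] w = v := by
  classical
  have hex : ∃ k, p^[k] w = v := h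
  let k₀ := Nat.find hex
  have hk₀ : p^[k₀] w = v := Nat.find_spec hex
  by_cases hlt : k₀ < n
  · exact ⟨k₀, hlt, hk₀⟩
  · exfalso
    push_neg at hlt
    have hn0 : 0 < n := (Fin.pos_iff_nonempty).2 ⟨v⟩
    -- pigeonhole among p^[0] w, ..., p^[n] w
    have : ∃ i j : Fin (n+1), i ≠ j ∧ p^[(i:ℕ)] w = p^[(j:ℕ)] w := by
      have hcard : Fintype.card (Fin n) < Fintype.card (Fin (n+1)) := by simp
      obtain ⟨i, j, hij, hval⟩ := Fintype.exists_ne_map_eq_of_card_lt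
        (fun i : Fin (n+1) => p^[(i:ℕ)] w) hcard
      exact ⟨i, j, hij, hval⟩
    obtain ⟨i, j, hij, hval⟩ := this
    have main : ∀ a b : ℕ, a < b → b ≤ n → p^[a] w = p^[b] w → False := by
      intro a b hab hbn hvaleq
      have hbk : b ≤ k₀ := le_trans hbn hlt
      have hper : p^[a + (k₀ - b)] w = v := by
        have h1 : p^[k₀ - b] (p^[b] w) = v := by
          rw [← Function.iterate_add_apply]
          rw [show k₀ - b + b = k₀ by omega]
          exact hk₀
        rw [← hvaleq] at h1
        rw [← Function.iterate_add_apply] at h1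
        rw [show k₀ - b + a = a + (k₀ - b) by omega] at h1
        exact h1
      exact Nat.find_min hex (by omega) hper
    have hijv : (i:ℕ) ≠ (j:ℕ) := fun h => hij (Fin.ext h)
    rcases Nat.lt_or_ge (i:ℕ) (j:ℕ) with h | h
    · exact main i j h (Nat.lt_succ_iff.1 j.isLt) hval
    · exact main j i (by omega) (Nat.lt_succ_iff.1 i.isLt) hval.symm

lemma reach_iff {n : ℕ} (p : Fin n → Fin n) (v w : Fin n) :
    (∃ k < n, p^[k] w = v) ↔ Reach p v w :=
  ⟨fun ⟨k, _, hk⟩ => ⟨k, hk⟩, reach_bounded p⟩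

lemma hookA_eq {n : ℕ} (p : Fin n → Fin n) (v : Fin n) :
    hookA n p v = (Finset.univ.filter fun w => Reach p v w).card := by
  classical
  unfold hookA
  congr 1
  apply Finset.filter_congr
  intro w _
  simp only [reach_iff]

lemma le_p {n : ℕ} {p : Fin n → Fin n} (hp : IsAndreTree n p) (i : Fin n) : (i:ℕ) ≤ (p i : ℕ) := by
  by_cases h : (i:ℕ) + 1 < n
  · exact le_of_lt (hp.1 i h)
  · rw [hp.2.1 i h]

lemma p_root {n : ℕ} {p : Fin n → Fin n} (hp : IsAndreTree n p) (hn : 0 < n) :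
    p ⟨n-1, by omega⟩ = ⟨n-1, by omega⟩ := by
  apply hp.2.1
  show ¬ (n - 1 + 1 < n)
  omega

lemma reach_root {n : ℕ} {p : Fin n → Fin n} (hp : IsAndreTree n p) (hn : 0 < n) (v : Fin n) :
    Reach p ⟨n-1, by omega⟩ v := by
  have H : ∀ d : ℕ, ∀ v : Fin n, n - 1 - (v:ℕ) ≤ d → Reach p ⟨n-1, by omega⟩ v := by
    intro d
    induction d with
    | zero =>
      intro v hv
      have hveq : (v:ℕ) = n - 1 := by have := v.isLt; omega
      have : v = (⟨n-1, by omega⟩ : Fin n) := Fin.ext hveq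
      rw [this]; exact reach_self p _
    | succ d ih =>
      intro v hv
      by_cases hvm : (v:ℕ) = n - 1
      · have : v = (⟨n-1, by omega⟩ : Fin n) := Fin.ext hvm
        rw [this]; exact reach_self p _
      · have hlt : (v:ℕ) + 1 < n := by have := v.isLt; omega
        have hstep := hp.1 v hlt
        have : n - 1 - ((p v : ℕ)) ≤ d := by omega
        exact reach_of_reach_apply p (ih (p v) this)
  exact H (n - 1 - (v:ℕ)) v le_rfl

lemma hookA_root {n : ℕ} {p : Fin n → Fin n} (hp : IsAndreTree n p) (hn : 0 < n) :
    hookA n p ⟨n-1, by omega⟩ = n := by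
  rw [hookA_eq]
  have h : (Finset.univ.filter fun w => Reach p ⟨n-1, by omega⟩ w) = Finset.univ := by
    apply Finset.filter_true_of_mem
    intro w _
    exact reach_root hp hn w
  rw [h]
  simp

lemma reach_le {n : ℕ} {p : Fin n → Fin n} (hp : IsAndreTree n p) {v w : Fin n}
    (h : Reach p v w) : (w:ℕ) ≤ (v:ℕ) := by
  obtain ⟨k, hk⟩ := h
  have H : ∀ k, (w : ℕ) ≤ (p^[k] w : ℕ) := by
    intro k
    induction k with
    | zero => simp
    | succ k ih =>
      rw [Function.iterate_succ_apply']
      exact le_trans ih (le_p hp _)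
  rw [← hk]
  exact H k

lemma reach_apply_of_reach_ne {n : ℕ} {p : Fin n → Fin n} {v w : Fin n}
    (h : Reach p v w) (hne : w ≠ v) : Reach p v (p w) := by
  obtain ⟨k, hk⟩ := h
  rcases k with _ | k
  · exact absurd hk hne
  · rw [Function.iterate_succ_apply] at hk
    exact ⟨k, hk⟩
section transport

variable {n k : ℕ} {p : Fin n → Fin n} {q : Fin k → Fin k} {σ : Fin k → Fin n}

/-- Forward trajectory transport. -/
lemma Ta (hσ : Function.Injective σ)
    (H1 : ∀ i : Fin k, (i : ℕ) + 1 < k → p (σ i) = σ (q i)) :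
    ∀ (t : ℕ) (j : Fin k), (∀ t' < t, ((q^[t'] j : Fin k) : ℕ) + 1 < k) →
      p^[t] (σ j) = σ (q^[t] j) := by
  intro t
  induction t with
  | zero => intro j _; rfl
  | succ t ih =>
    intro j hj
    rw [Function.iterate_succ_apply', Function.iterate_succ_apply']
    rw [ih j (fun t' ht' => hj t' (Nat.lt_succ_of_lt ht'))]
    exact H1 _ (hj t (Nat.lt_succ_self t))

/-- Backward trajectory transport. -/
lemma Tb (hσ : Function.Injective σ)
    (H1 : ∀ i : Fin k, (i : ℕ) + 1 < k → p (σ i) = σ (q i))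
    (H3 : ∀ v : Fin n, p v ∈ Set.range σ → ∃ i : Fin k, (i : ℕ) + 1 < k ∧ v = σ i) :
    ∀ (t : ℕ) (j i : Fin k), p^[t] (σ j) = σ i → q^[t] j = i := by
  intro t
  induction t with
  | zero => intro j i h; exact hσ h
  | succ t ih =>
    intro j i h
    rw [Function.iterate_succ_apply'] at h
    obtain ⟨i', hi', hival⟩ := H3 _ ⟨i, h.symm⟩
    have hq : q^[t] j = i' := ih j i' hival
    rw [Function.iterate_succ_apply', hq]
    apply hσ
    rw [← H1 i' hi', ← hival]
    exact h

/-- subtree of `σ i` is inside the range of `σ`. -/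
lemma T2 (hσ : Function.Injective σ)
    (H3 : ∀ v : Fin n, p v ∈ Set.range σ → ∃ i : Fin k, (i : ℕ) + 1 < k ∧ v = σ i) :
    ∀ (t : ℕ) (w : Fin n) (i : Fin k), p^[t] w = σ i → w ∈ Set.range σ := by
  intro t
  induction t with
  | zero => intro w i h; exact ⟨i, h.symm⟩
  | succ t ih =>
    intro w i h
    rw [Function.iterate_succ_apply] at h
    obtain ⟨i', hi', hival⟩ := H3 w (by
      obtain ⟨i'', h''⟩ := ih (p w) i h
      exact ⟨i'', h''⟩)
    exact ⟨i', hival.symm⟩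

lemma T1 (hσ : Function.Injective σ) (hq : IsAndreTree k q)
    (H1 : ∀ i : Fin k, (i : ℕ) + 1 < k → p (σ i) = σ (q i))
    (H3 : ∀ v : Fin n, p v ∈ Set.range σ → ∃ i : Fin k, (i : ℕ) + 1 < k ∧ v = σ i)
    (i j : Fin k) : Reach p (σ i) (σ j) ↔ Reach q i j := by
  constructor
  · rintro ⟨t, ht⟩
    exact ⟨t, Tb hσ H1 H3 t j i ht⟩
  · rintro ⟨t, ht⟩
    have hex : ∃ t, q^[t] j = i := ⟨t, ht⟩
    set t₀ := Nat.find hex with ht₀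
    have hspec : q^[t₀] j = i := Nat.find_spec hex
    have hnr : ∀ t' < t₀, ((q^[t'] j : Fin k) : ℕ) + 1 < k := by
      intro t' ht'
      by_contra hcon
      have hfix : q (q^[t'] j) = q^[t'] j := hq.2.1 _ hcon
      have hall : ∀ s, q^[t' + s] j = q^[t'] j := by
        intro s
        induction s with
        | zero => rfl
        | succ s ih2 =>
          rw [show t' + (s+1) = (t'+s)+1 from rfl, Function.iterate_succ_apply', ih2, hfix]
      have : q^[t'] j = i := by
        have := hall (t₀ - t')
        rw [show t' + (t₀ - t') = t₀ by omega] at this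
        rw [← this, hspec]
      exact absurd this (Nat.find_min hex ht')
    exact ⟨t₀, by rw [Ta hσ H1 t₀ j hnr, hspec]⟩

lemma T3 (hσ : Function.Injective σ) (hq : IsAndreTree k q)
    (H1 : ∀ i : Fin k, (i : ℕ) + 1 < k → p (σ i) = σ (q i))
    (H3 : ∀ v : Fin n, p v ∈ Set.range σ → ∃ i : Fin k, (i : ℕ) + 1 < k ∧ v = σ i)
    (i : Fin k) : hookA n p (σ i) = hookA k q i := by
  rw [hookA_eq, hookA_eq]
  have hset : (Finset.univ.filter fun w => Reach p (σ i) w)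
      = (Finset.univ.filter fun j => Reach q i j).map ⟨σ, hσ⟩ := by
    ext w
    simp only [Finset.mem_filter, Finset.mem_univ, true_and, Finset.mem_map,
      Function.Embedding.coeFn_mk]
    constructor
    · intro hr
      obtain ⟨t, ht⟩ := hr
      obtain ⟨j, hj⟩ := T2 hσ H3 t w i ht
      subst hj
      exact ⟨j, (T1 hσ hq H1 H3 i j).1 ⟨t, ht⟩, rfl⟩
    · rintro ⟨j, hrj, rfl⟩
      exact (T1 hσ hq H1 H3 i j).2 hrj
  rw [hset, Finset.card_map]

lemma T4 (hσ : Function.Injective σ) (hq : IsAndreTree k q)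
    (H1 : ∀ i : Fin k, (i : ℕ) + 1 < k → p (σ i) = σ (q i))
    (H3 : ∀ v : Fin n, p v ∈ Set.range σ → ∃ i : Fin k, (i : ℕ) + 1 < k ∧ v = σ i)
    (i : Fin k) : σ i ∈ internalsA n p ↔ i ∈ internalsA k q := by
  unfold internalsA
  simp only [Finset.mem_filter, Finset.mem_univ, true_and]
  rw [T3 hσ hq H1 H3 i]

end transport
noncomputable section Decomp

variable {m : ℕ}

/-- the embedding of the indices of `S` into `Fin (m+1)` -/
def sig (S : Finset (Fin m)) : Fin S.card → Fin (m+1) :=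
  fun i => Fin.castSucc ((S.orderIsoOfFin rfl i : Fin m))

lemma sig_strictMono (S : Finset (Fin m)) : StrictMono (sig S) := by
  intro i j hij
  have h : (S.orderIsoOfFin rfl i : Fin m) < (S.orderIsoOfFin rfl j : Fin m) := by
    exact_mod_cast (S.orderIsoOfFin rfl).strictMono hij
  exact Fin.castSucc_lt_castSucc_iff.2 h

lemma sig_inj (S : Finset (Fin m)) : Function.Injective (sig S) :=
  (sig_strictMono S).injective

lemma sig_lt (S : Finset (Fin m)) (i : Fin S.card) : ((sig S i : Fin (m+1)) : ℕ) < m := by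
  simpa [sig] using (S.orderIsoOfFin rfl i : Fin m).isLt

lemma mem_range_sig {S : Finset (Fin m)} {v : Fin (m+1)} :
    v ∈ Set.range (sig S) ↔ ∃ hv : (v:ℕ) < m, (⟨(v:ℕ), hv⟩ : Fin m) ∈ S := by
  constructor
  · rintro ⟨i, rfl⟩
    refine ⟨sig_lt S i, ?_⟩
    have : (⟨((sig S i : Fin (m+1)) : ℕ), sig_lt S i⟩ : Fin m) = (S.orderIsoOfFin rfl i : Fin m) := by
      apply Fin.ext; simp [sig]
    rw [this]
    exact (S.orderIsoOfFin rfl i).2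
  · rintro ⟨hv, hmem⟩
    refine ⟨(S.orderIsoOfFin rfl).symm ⟨⟨(v:ℕ), hv⟩, hmem⟩, ?_⟩
    apply Fin.ext
    simp [sig]

lemma range_sig_disjoint (S : Finset (Fin m)) {v : Fin (m+1)}
    (h1 : v ∈ Set.range (sig S)) (h2 : v ∈ Set.range (sig Sᶜ)) : False := by
  obtain ⟨hv, hm1⟩ := mem_range_sig.1 h1
  obtain ⟨hv', hm2⟩ := mem_range_sig.1 h2
  rw [show (⟨(v:ℕ), hv'⟩ : Fin m) = ⟨(v:ℕ), hv⟩ from rfl] at hm2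
  exact (Finset.mem_compl.1 hm2) hm1

/-- the top index of a nonempty finset -/
def topIdx (S : Finset (Fin m)) (hS : 0 < S.card) : Fin S.card := ⟨S.card - 1, by omega⟩

lemma sig_le_top (S : Finset (Fin m)) (hS : 0 < S.card) (i : Fin S.card) :
    sig S i ≤ sig S (topIdx S hS) := by
  rcases eq_or_lt_of_le (show (i:ℕ) ≤ S.card - 1 by have := i.isLt; omega) with h | h
  · have : i = topIdx S hS := Fin.ext h
    rw [this]
  · exact le_of_lt ((sig_strictMono S) (by simpa [topIdx, Fin.lt_def] using h))

lemma eq_top_of_not_lt {S : Finset (Fin m)} {i : Fin S.card} (h : ¬ ((i:ℕ) + 1 < S.card)) :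
    ∃ hS : 0 < S.card, i = topIdx S hS := by
  have h1 : 0 < S.card := lt_of_le_of_lt (Nat.zero_le _) i.isLt
  exact ⟨h1, Fin.ext (by have := i.isLt; simp [topIdx]; omega)⟩

/-- the distinguished second-largest vertex -/
def ell (m : ℕ) : Fin (m+1) := ⟨m-1, by omega⟩

lemma sig_top_of_ell_mem (hm : 0 < m) {S : Finset (Fin m)} (hS : (⟨m-1, by omega⟩ : Fin m) ∈ S) :
    sig S (topIdx S (Finset.card_pos.2 ⟨_, hS⟩)) = ell m := by
  have h1 : ∀ s ∈ S, s ≤ (⟨m-1, by omega⟩ : Fin m) := by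
    intro s _
    rw [Fin.le_def]
    have := s.isLt
    show (s:ℕ) ≤ m - 1
    omega
  set hpos := Finset.card_pos.2 ⟨_, hS⟩
  have h2 : sig S (topIdx S hpos) ≤ ell m := by
    have := h1 _ (S.orderIsoOfFin rfl (topIdx S hpos)).2
    simpa [sig, ell, Fin.le_def] using this
  have h3 : ell m ≤ sig S (topIdx S hpos) := by
    have hin : (⟨(ell m : ℕ), by simp [ell]; omega⟩ : Fin m) ∈ S := by
      convert hS using 2 <;> simp [ell]
    have hr : ell m ∈ Set.range (sig S) := mem_range_sig.2 ⟨by simp [ell]; omega, hin⟩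
    obtain ⟨i, hi⟩ := hr
    rw [← hi]
    exact sig_le_top S hpos i
  exact le_antisymm h2 h3

def phi (S : Finset (Fin m)) (q1 : Fin S.card → Fin S.card) (q2 : Fin Sᶜ.card → Fin Sᶜ.card) :
    Fin (m+1) → Fin (m+1) :=
  fun v =>
    if hv : (v:ℕ) < m then
      if hvS : (⟨(v:ℕ), hv⟩ : Fin m) ∈ S then
        (if ((((S.orderIsoOfFin rfl).symm ⟨⟨(v:ℕ), hv⟩, hvS⟩ : Fin S.card)) : ℕ) + 1 < S.card
          then sig S (q1 ((S.orderIsoOfFin rfl).symm ⟨⟨(v:ℕ), hv⟩, hvS⟩))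
          else Fin.last m)
      else
        (if ((((Sᶜ.orderIsoOfFin rfl).symm ⟨⟨(v:ℕ), hv⟩, Finset.mem_compl.2 hvS⟩ : Fin Sᶜ.card)) : ℕ) + 1 < Sᶜ.card
          then sig Sᶜ (q2 ((Sᶜ.orderIsoOfFin rfl).symm ⟨⟨(v:ℕ), hv⟩, Finset.mem_compl.2 hvS⟩))
          else Fin.last m)
    else Fin.last m

def ind (S : Finset (Fin m)) (p : Fin (m+1) → Fin (m+1)) : Fin S.card → Fin S.card :=
  fun i =>
    if h1 : ((p (sig S i)) : ℕ) < m then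
      (if h2 : (⟨((p (sig S i)) : ℕ), h1⟩ : Fin m) ∈ S then
        (S.orderIsoOfFin rfl).symm ⟨⟨((p (sig S i)) : ℕ), h1⟩, h2⟩
      else i)
    else i

/-- the set of vertices below (and including) `ell` -/
def Sset (p : Fin (m+1) → Fin (m+1)) : Finset (Fin m) :=
  Finset.univ.filter fun v : Fin m => Reach p (ell m) (Fin.castSucc v)

end Decomp

section Psi
variable {m : ℕ} {p : Fin (m+1) → Fin (m+1)}

/-- root of Fin (m+1) -/
noncomputable def rt (m : ℕ) : Fin (m+1) := ⟨m, by omega⟩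

lemma rt_eq (m : ℕ) : rt m = ⟨m+1-1, by omega⟩ := rfl

lemma p_rt (hp : IsAndreTree (m+1) p) : p (rt m) = rt m := by
  rw [rt_eq]; exact p_root hp (by omega)

lemma eq_rt_of_not_lt {v : Fin (m+1)} (h : ¬ ((v:ℕ) < m)) : v = rt m := by
  apply Fin.ext
  have := v.isLt
  show (v:ℕ) = m
  omega

lemma sig_symm_apply (S : Finset (Fin m)) (x : {y // y ∈ S}) :
    sig S ((S.orderIsoOfFin rfl).symm x) = Fin.castSucc (x : Fin m) := by
  unfold sig
  rw [OrderIso.apply_symm_apply]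

lemma castSucc_val {v : Fin (m+1)} (hv : (v:ℕ) < m) :
    Fin.castSucc (⟨(v:ℕ), hv⟩ : Fin m) = v := by
  apply Fin.ext; rfl

lemma ellm_mem (hm : 0 < m) (p : Fin (m+1) → Fin (m+1)) : (⟨m-1, by omega⟩ : Fin m) ∈ Sset p := by
  unfold Sset
  rw [Finset.mem_filter]
  refine ⟨Finset.mem_univ _, ?_⟩
  have : Fin.castSucc (⟨m-1, by omega⟩ : Fin m) = ell m := by apply Fin.ext; rfl
  rw [this]
  exact reach_self p _

lemma p_ell (hm : 0 < m) (hp : IsAndreTree (m+1) p) : p (ell m) = rt m := by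
  have h1 : ((ell m : Fin (m+1)) : ℕ) + 1 < m + 1 := by
    show (m-1) + 1 < m+1
    omega
  have h2 := hp.1 _ h1
  have h3 : ((ell m : Fin (m+1)) : ℕ) = m - 1 := rfl
  rw [h3] at h2
  apply eq_rt_of_not_lt
  omega

lemma mem_range_sig_Sset (hm : 0 < m) (hp : IsAndreTree (m+1) p) {v : Fin (m+1)} :
    v ∈ Set.range (sig (Sset p)) ↔ Reach p (ell m) v := by
  rw [mem_range_sig]
  constructor
  · rintro ⟨hv, hmem⟩
    unfold Sset at hmem
    rw [Finset.mem_filter] at hmem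
    rw [← castSucc_val hv]
    exact hmem.2
  · intro hr
    have hle : (v:ℕ) ≤ (ell m : ℕ) := reach_le hp hr
    have hv : (v:ℕ) < m := by simp only [ell] at hle; omega
    refine ⟨hv, ?_⟩
    unfold Sset
    rw [Finset.mem_filter]
    exact ⟨Finset.mem_univ _, by rw [castSucc_val hv]; exact hr⟩

lemma mem_range_sig_Sset_compl (hm : 0 < m) (hp : IsAndreTree (m+1) p) {v : Fin (m+1)} :
    v ∈ Set.range (sig (Sset p)ᶜ) ↔ ((v:ℕ) < m ∧ ¬ Reach p (ell m) v) := by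
  rw [mem_range_sig]
  constructor
  · rintro ⟨hv, hmem⟩
    rw [Finset.mem_compl] at hmem
    refine ⟨hv, fun hr => hmem ?_⟩
    unfold Sset
    rw [Finset.mem_filter]
    exact ⟨Finset.mem_univ _, by rw [castSucc_val hv]; exact hr⟩
  · rintro ⟨hv, hnr⟩
    refine ⟨hv, ?_⟩
    rw [Finset.mem_compl]
    intro hmem
    unfold Sset at hmem
    rw [Finset.mem_filter] at hmem
    rw [castSucc_val hv] at hmem
    exact hnr hmem.2

lemma sig_Sset_top (hm : 0 < m) (p : Fin (m+1) → Fin (m+1)) :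
    ∀ hpos : 0 < (Sset p).card, sig (Sset p) (topIdx (Sset p) hpos) = ell m := by
  intro hpos
  exact sig_top_of_ell_mem hm (ellm_mem hm p)

/-- H1 for the S side -/
lemma H1S (hm : 0 < m) (hp : IsAndreTree (m+1) p) (i : Fin (Sset p).card)
    (hi : (i:ℕ) + 1 < (Sset p).card) : p (sig (Sset p) i) = sig (Sset p) (ind (Sset p) p i) := by
  set v := sig (Sset p) i with hv
  have hrv : Reach p (ell m) v := (mem_range_sig_Sset hm hp).1 ⟨i, rfl⟩
  have hvne : v ≠ ell m := by
    intro heq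
    have hpos : 0 < (Sset p).card := lt_of_le_of_lt (Nat.zero_le _) i.isLt
    have : v = sig (Sset p) (topIdx (Sset p) hpos) := by rw [heq, sig_Sset_top hm p hpos]
    have := sig_inj (Sset p) (hv ▸ this)
    rw [this] at hi
    simp [topIdx] at hi
    omega
  have hrpv : Reach p (ell m) (p v) := reach_apply_of_reach_ne hrv hvne
  obtain ⟨h1, h2⟩ : ∃ h1 : ((p v : Fin (m+1)) : ℕ) < m, (⟨((p v : Fin (m+1)) : ℕ), h1⟩ : Fin m) ∈ Sset p := by
    have := (mem_range_sig_Sset hm hp).2 hrpv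
    rwa [mem_range_sig] at this
  unfold ind
  rw [dif_pos h1, dif_pos h2]
  rw [sig_symm_apply]
  exact (castSucc_val h1).symm

/-- H3 for the S side -/
lemma H3S (hm : 0 < m) (hp : IsAndreTree (m+1) p) (v : Fin (m+1))
    (h : p v ∈ Set.range (sig (Sset p))) :
    ∃ i : Fin (Sset p).card, (i:ℕ) + 1 < (Sset p).card ∧ v = sig (Sset p) i := by
  have hrpv : Reach p (ell m) (p v) := (mem_range_sig_Sset hm hp).1 h
  have hrv : Reach p (ell m) v := reach_of_reach_apply p hrpv
  obtain ⟨i, hi⟩ := (mem_range_sig_Sset hm hp).2 hrv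
  refine ⟨i, ?_, hi.symm⟩
  by_contra hcon
  obtain ⟨hpos, htop⟩ := eq_top_of_not_lt hcon
  rw [htop] at hi
  rw [sig_Sset_top hm p hpos] at hi
  rw [← hi] at h
  rw [p_ell hm hp] at h
  obtain ⟨j, hj⟩ := h
  have := sig_lt (Sset p) j
  rw [hj] at this
  simp [rt] at this

/-- the maximum of the complement is a child of the root -/
lemma p_top_compl (hm : 0 < m) (hp : IsAndreTree (m+1) p)
    (hT : 0 < (Sset p)ᶜ.card) : p (sig (Sset p)ᶜ (topIdx _ hT)) = rt m := by
  set vT := sig (Sset p)ᶜ (topIdx _ hT) with hvT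
  have hvTlt : ((vT : Fin (m+1)) : ℕ) < m := sig_lt _ _
  have hvTlt1 : ((vT : Fin (m+1)) : ℕ) + 1 < m + 1 := by omega
  have hgt := hp.1 _ hvTlt1
  have hmemT : vT ∈ Set.range (sig (Sset p)ᶜ) := ⟨_, rfl⟩
  have hnr : ¬ Reach p (ell m) vT := ((mem_range_sig_Sset_compl hm hp).1 hmemT).2
  apply eq_rt_of_not_lt
  intro hlt
  -- p vT has value < m, so lies in S side or Sᶜ side
  by_cases hrS : Reach p (ell m) (p vT)
  · exact hnr (reach_of_reach_apply p hrS)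
  · have hmemc : p vT ∈ Set.range (sig (Sset p)ᶜ) :=
      (mem_range_sig_Sset_compl hm hp).2 ⟨hlt, hrS⟩
    obtain ⟨j, hj⟩ := hmemc
    have hle : p vT ≤ vT := by rw [← hj]; exact sig_le_top _ hT j
    rw [Fin.le_def] at hle
    omega

/-- H1 for the complement side -/
lemma H1T (hm : 0 < m) (hp : IsAndreTree (m+1) p) (i : Fin ((Sset p)ᶜ).card)
    (hi : (i:ℕ) + 1 < ((Sset p)ᶜ).card) :
    p (sig (Sset p)ᶜ i) = sig (Sset p)ᶜ (ind (Sset p)ᶜ p i) := by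
  set v := sig (Sset p)ᶜ i with hv
  have hT : 0 < ((Sset p)ᶜ).card := lt_of_le_of_lt (Nat.zero_le _) i.isLt
  have hvlt : ((v : Fin (m+1)) : ℕ) < m := sig_lt _ _
  have hmemv : v ∈ Set.range (sig (Sset p)ᶜ) := ⟨i, rfl⟩
  have hnrv : ¬ Reach p (ell m) v := ((mem_range_sig_Sset_compl hm hp).1 hmemv).2
  have hnrpv : ¬ Reach p (ell m) (p v) := fun hr => hnrv (reach_of_reach_apply p hr)
  -- p v ≠ root
  have hplt : ((p v : Fin (m+1)) : ℕ) < m := by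
    by_contra hcon
    have hpv : p v = rt m := eq_rt_of_not_lt hcon
    set vT := sig (Sset p)ᶜ (topIdx _ hT) with hvT
    have h3 : ({v, vT, ell m} : Finset (Fin (m+1)))
        ⊆ Finset.univ.filter (fun w : Fin (m+1) => (w:ℕ) + 1 < m+1 ∧ p w = rt m) := by
      intro w hw
      simp only [Finset.mem_insert, Finset.mem_singleton] at hw
      rw [Finset.mem_filter]
      rcases hw with rfl | rfl | rfl
      · exact ⟨Finset.mem_univ _, by omega, hpv⟩
      · exact ⟨Finset.mem_univ _, by have := sig_lt (Sset p)ᶜ (topIdx _ hT); omega,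
          p_top_compl hm hp hT⟩
      · exact ⟨Finset.mem_univ _, by show (m-1)+1 < m+1; omega, p_ell hm hp⟩
    have hvvT : v ≠ vT := by
      intro heq
      have := sig_inj _ (hv ▸ hvT ▸ heq)
      rw [this] at hi
      simp [topIdx] at hi
      omega
    have hvell : v ≠ ell m := fun heq => hnrv (heq ▸ reach_self p _)
    have hvTell : vT ≠ ell m := by
      intro heq
      have hmemvT : vT ∈ Set.range (sig (Sset p)ᶜ) := ⟨_, rfl⟩
      have := ((mem_range_sig_Sset_compl hm hp).1 hmemvT).2
      exact this (heq ▸ reach_self p _)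
    have hcard3 : ({v, vT, ell m} : Finset (Fin (m+1))).card = 3 := by
      rw [Finset.card_insert_of_notMem (by simp [hvvT, hvell]),
        Finset.card_insert_of_notMem (by simp [hvTell])]
      simp
    have := Finset.card_le_card h3
    rw [hcard3] at this
    have h2 := (hp.2.2 (rt m))
    -- the filter in hp.2.2 is over (w:ℕ)+1 < m+1 ∧ p w = rt m
    omega
  have hmempc : p v ∈ Set.range (sig (Sset p)ᶜ) :=
    (mem_range_sig_Sset_compl hm hp).2 ⟨hplt, hnrpv⟩
  obtain ⟨hv2, hmem2⟩ := mem_range_sig.1 hmempc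
  unfold ind
  rw [dif_pos hv2, dif_pos hmem2]
  rw [sig_symm_apply]
  exact (castSucc_val hv2).symm

/-- H3 for the complement side -/
lemma H3T (hm : 0 < m) (hp : IsAndreTree (m+1) p) (v : Fin (m+1))
    (h : p v ∈ Set.range (sig (Sset p)ᶜ)) :
    ∃ i : Fin ((Sset p)ᶜ).card, (i:ℕ) + 1 < ((Sset p)ᶜ).card ∧ v = sig (Sset p)ᶜ i := by
  obtain ⟨hplt, hnrpv⟩ := (mem_range_sig_Sset_compl hm hp).1 h
  have hvlt : (v:ℕ) < m := lt_of_le_of_lt (le_p hp v) hplt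
  have hnrv : ¬ Reach p (ell m) v := by
    intro hr
    by_cases hve : v = ell m
    · rw [hve, p_ell hm hp] at hplt
      simp [rt] at hplt
    · exact hnrpv (reach_apply_of_reach_ne hr hve)
  obtain ⟨i, hi⟩ := (mem_range_sig_Sset_compl hm hp).2 ⟨hvlt, hnrv⟩
  refine ⟨i, ?_, hi.symm⟩
  by_contra hcon
  obtain ⟨hpos, htop⟩ := eq_top_of_not_lt hcon
  rw [htop] at hi
  rw [← hi, p_top_compl hm hp hpos] at hplt
  simp [rt] at hplt

end Psi

section Psi2
variable {m : ℕ} {p : Fin (m+1) → Fin (m+1)}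

lemma ind_isAndre (A : Finset (Fin m)) (hp : IsAndreTree (m+1) p)
    (HH1 : ∀ i : Fin A.card, (i:ℕ)+1 < A.card → p (sig A i) = sig A (ind A p i))
    (Htop : ∀ hA : 0 < A.card, ¬ (((p (sig A (topIdx A hA))) : ℕ) < m)) :
    IsAndreTree A.card (ind A p) := by
  refine ⟨?_, ?_, ?_⟩
  · intro i hi
    have h1 := HH1 i hi
    have h2 : ((sig A i : Fin (m+1)) : ℕ) + 1 < m + 1 := by
      have := sig_lt A i; omega
    have h3 := hp.1 _ h2
    rw [h1] at h3
    have : sig A i < sig A (ind A p i) := by rw [Fin.lt_def]; exact h3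
    exact (sig_strictMono A).lt_iff_lt.1 this
  · intro i hi
    obtain ⟨hA, htop⟩ := eq_top_of_not_lt hi
    have hne := Htop hA
    rw [← htop] at hne
    unfold ind
    rw [dif_neg hne]
  · intro j
    calc (Finset.univ.filter fun i : Fin A.card => (i:ℕ)+1 < A.card ∧ ind A p i = j).card
        ≤ (Finset.univ.filter fun w : Fin (m+1) => (w:ℕ)+1 < m+1 ∧ p w = sig A j).card := by
          apply Finset.card_le_card_of_injOn (sig A)
          · intro i hi
            rw [Finset.mem_coe, Finset.mem_filter] at hi ⊢
            obtain ⟨-, hi1, hi2⟩ := hi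
            refine ⟨Finset.mem_univ _, by have := sig_lt A i; omega, ?_⟩
            rw [HH1 i hi1, hi2]
          · exact Function.Injective.injOn (sig_inj A)
      _ ≤ 2 := hp.2.2 _

lemma tricho (S : Finset (Fin m)) (v : Fin (m+1)) :
    v = rt m ∨ v ∈ Set.range (sig S) ∨ v ∈ Set.range (sig Sᶜ) := by
  by_cases hv : (v:ℕ) < m
  · by_cases hvS : (⟨(v:ℕ), hv⟩ : Fin m) ∈ S
    · exact Or.inr (Or.inl (mem_range_sig.2 ⟨hv, hvS⟩))
    · exact Or.inr (Or.inr (mem_range_sig.2 ⟨hv, Finset.mem_compl.2 hvS⟩))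
  · exact Or.inl (eq_rt_of_not_lt hv)

lemma rt_not_mem_range (S : Finset (Fin m)) : rt m ∉ Set.range (sig S) := by
  intro h
  have := sig_lt S h.choose
  rw [h.choose_spec] at this
  simp [rt] at this

lemma hookA_rt (hp : IsAndreTree (m+1) p) : hookA (m+1) p (rt m) = m + 1 := by
  rw [rt_eq]
  exact hookA_root hp (by omega)

lemma rt_internal (hm : 0 < m) (hp : IsAndreTree (m+1) p) : rt m ∈ internalsA (m+1) p := by
  unfold internalsA
  rw [Finset.mem_filter]
  exact ⟨Finset.mem_univ _, by rw [hookA_rt hp]; omega⟩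

lemma internals_decomp (hm : 0 < m) (hp : IsAndreTree (m+1) p) :
    internalsA (m+1) p = insert (rt m)
      (((internalsA (Sset p).card (ind (Sset p) p)).map ⟨sig (Sset p), sig_inj _⟩)
      ∪ ((internalsA ((Sset p)ᶜ).card (ind (Sset p)ᶜ p)).map ⟨sig (Sset p)ᶜ, sig_inj _⟩)) := by
  have hq1 : IsAndreTree (Sset p).card (ind (Sset p) p) := by
    apply ind_isAndre _ hp (H1S hm hp)
    intro hA
    rw [sig_Sset_top hm p hA, p_ell hm hp]
    simp [rt]
  have hq2 : IsAndreTree ((Sset p)ᶜ).card (ind (Sset p)ᶜ p) := by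
    apply ind_isAndre _ hp (H1T hm hp)
    intro hA
    rw [p_top_compl hm hp hA]
    simp [rt]
  ext v
  rcases tricho (Sset p) v with rfl | ⟨i, rfl⟩ | ⟨i, rfl⟩
  · constructor
    · intro _; exact Finset.mem_insert_self _ _
    · intro _; exact rt_internal hm hp
  · rw [T4 (sig_inj _) hq1 (H1S hm hp) (H3S hm hp) i]
    simp only [Finset.mem_insert, Finset.mem_union, Finset.mem_map,
      Function.Embedding.coeFn_mk]
    constructor
    · intro h
      exact Or.inr (Or.inl ⟨i, h, rfl⟩)
    · rintro (h | ⟨j, hj, hj2⟩ | ⟨j, hj, hj2⟩)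
      · exact absurd h.symm (by intro hh; exact rt_not_mem_range (Sset p) ⟨i, hh.symm⟩)
      · rwa [← sig_inj _ hj2]
      · exact (range_sig_disjoint (Sset p) ⟨i, rfl⟩ ⟨j, hj2⟩).elim
  · rw [T4 (sig_inj _) hq2 (H1T hm hp) (H3T hm hp) i]
    simp only [Finset.mem_insert, Finset.mem_union, Finset.mem_map,
      Function.Embedding.coeFn_mk]
    constructor
    · intro h
      exact Or.inr (Or.inr ⟨i, h, rfl⟩)
    · rintro (h | ⟨j, hj, hj2⟩ | ⟨j, hj, hj2⟩)
      · exact absurd h.symm (by intro hh; exact rt_not_mem_range (Sset p)ᶜ ⟨i, hh.symm⟩)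
      · exact (range_sig_disjoint (Sset p) ⟨j, hj2⟩ ⟨i, rfl⟩).elim
      · rwa [← sig_inj _ hj2]

lemma weight_decomp (hm : 0 < m) (hp : IsAndreTree (m+1) p) :
    ∏ v ∈ internalsA (m+1) p, (hookA (m+1) p v + 1)
      = (m+2) * (∏ i ∈ internalsA (Sset p).card (ind (Sset p) p), (hookA (Sset p).card (ind (Sset p) p) i + 1))
        * (∏ i ∈ internalsA ((Sset p)ᶜ).card (ind (Sset p)ᶜ p), (hookA ((Sset p)ᶜ).card (ind (Sset p)ᶜ p) i + 1)) := by
  have hq1 : IsAndreTree (Sset p).card (ind (Sset p) p) := by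
    apply ind_isAndre _ hp (H1S hm hp)
    intro hA
    rw [sig_Sset_top hm p hA, p_ell hm hp]
    simp [rt]
  have hq2 : IsAndreTree ((Sset p)ᶜ).card (ind (Sset p)ᶜ p) := by
    apply ind_isAndre _ hp (H1T hm hp)
    intro hA
    rw [p_top_compl hm hp hA]
    simp [rt]
  rw [internals_decomp hm hp]
  rw [Finset.prod_insert (by
    simp only [Finset.mem_union, Finset.mem_map, Function.Embedding.coeFn_mk]
    rintro (⟨j, _, hj2⟩ | ⟨j, _, hj2⟩)
    · exact rt_not_mem_range (Sset p) ⟨j, hj2⟩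
    · exact rt_not_mem_range (Sset p)ᶜ ⟨j, hj2⟩)]
  rw [Finset.prod_union (by
    rw [Finset.disjoint_left]
    intro a ha hb
    simp only [Finset.mem_map, Function.Embedding.coeFn_mk] at ha hb
    obtain ⟨j1, _, h1⟩ := ha
    obtain ⟨j2, _, h2⟩ := hb
    exact range_sig_disjoint (Sset p) ⟨j1, h1⟩ ⟨j2, h2⟩)]
  rw [Finset.prod_map, Finset.prod_map]
  simp only [Function.Embedding.coeFn_mk]
  rw [hookA_rt hp]
  have e1 : ∏ i ∈ internalsA (Sset p).card (ind (Sset p) p), (hookA (m+1) p (sig (Sset p) i) + 1)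
      = ∏ i ∈ internalsA (Sset p).card (ind (Sset p) p), (hookA (Sset p).card (ind (Sset p) p) i + 1) :=
    Finset.prod_congr rfl (fun i _ => by rw [T3 (sig_inj _) hq1 (H1S hm hp) (H3S hm hp) i])
  have e2 : ∏ i ∈ internalsA ((Sset p)ᶜ).card (ind (Sset p)ᶜ p), (hookA (m+1) p (sig (Sset p)ᶜ i) + 1)
      = ∏ i ∈ internalsA ((Sset p)ᶜ).card (ind (Sset p)ᶜ p), (hookA ((Sset p)ᶜ).card (ind (Sset p)ᶜ p) i + 1) :=
    Finset.prod_congr rfl (fun i _ => by rw [T3 (sig_inj _) hq2 (H1T hm hp) (H3T hm hp) i])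
  rw [e1, e2]
  ring

end Psi2

section Phi
variable {m : ℕ} {S : Finset (Fin m)}
variable {q1 : Fin S.card → Fin S.card} {q2 : Fin Sᶜ.card → Fin Sᶜ.card}

lemma last_eq_rt : Fin.last m = rt m := rfl

lemma subtype_sig (S : Finset (Fin m)) (i : Fin S.card)
    (hv : ((sig S i : Fin (m+1)) : ℕ) < m) (hmem : (⟨((sig S i : Fin (m+1)) : ℕ), hv⟩ : Fin m) ∈ S) :
    (⟨⟨((sig S i : Fin (m+1)) : ℕ), hv⟩, hmem⟩ : {x // x ∈ S}) = S.orderIsoOfFin rfl i :=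
  Subtype.ext (Fin.ext rfl)

lemma sig_mem (S : Finset (Fin m)) (i : Fin S.card) (hv : ((sig S i : Fin (m+1)) : ℕ) < m) :
    (⟨((sig S i : Fin (m+1)) : ℕ), hv⟩ : Fin m) ∈ S := by
  obtain ⟨hv', hmem⟩ := mem_range_sig.1 ⟨i, rfl⟩
  exact hmem

lemma phi_sig1 (i : Fin S.card) (hi : (i:ℕ) + 1 < S.card) :
    phi S q1 q2 (sig S i) = sig S (q1 i) := by
  have hv : ((sig S i : Fin (m+1)) : ℕ) < m := sig_lt S i
  have hmem := sig_mem S i hv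
  unfold phi
  rw [dif_pos hv, dif_pos hmem, subtype_sig S i hv hmem, OrderIso.symm_apply_apply, if_pos hi]

lemma phi_sig1_top (hA : 0 < S.card) :
    phi S q1 q2 (sig S (topIdx S hA)) = Fin.last m := by
  have hv : ((sig S (topIdx S hA) : Fin (m+1)) : ℕ) < m := sig_lt S _
  have hmem := sig_mem S _ hv
  unfold phi
  rw [dif_pos hv, dif_pos hmem, subtype_sig S _ hv hmem, OrderIso.symm_apply_apply, if_neg]
  show ¬ (S.card - 1 + 1 < S.card)
  omega

lemma sig_mem_compl (S : Finset (Fin m)) (i : Fin Sᶜ.card) (hv : ((sig Sᶜ i : Fin (m+1)) : ℕ) < m) :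
    ¬ (⟨((sig Sᶜ i : Fin (m+1)) : ℕ), hv⟩ : Fin m) ∈ S := by
  obtain ⟨hv', hmem⟩ := mem_range_sig.1 (⟨i, rfl⟩ : sig Sᶜ i ∈ Set.range (sig Sᶜ))
  exact Finset.mem_compl.1 hmem

lemma phi_sig2 (i : Fin Sᶜ.card) (hi : (i:ℕ) + 1 < Sᶜ.card) :
    phi S q1 q2 (sig Sᶜ i) = sig Sᶜ (q2 i) := by
  have hv : ((sig Sᶜ i : Fin (m+1)) : ℕ) < m := sig_lt Sᶜ i
  have hmem := sig_mem_compl S i hv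
  unfold phi
  rw [dif_pos hv, dif_neg hmem, subtype_sig Sᶜ i hv (Finset.mem_compl.2 hmem),
    OrderIso.symm_apply_apply, if_pos hi]

lemma phi_sig2_top (hA : 0 < Sᶜ.card) :
    phi S q1 q2 (sig Sᶜ (topIdx Sᶜ hA)) = Fin.last m := by
  have hv : ((sig Sᶜ (topIdx Sᶜ hA) : Fin (m+1)) : ℕ) < m := sig_lt Sᶜ _
  have hmem := sig_mem_compl S _ hv
  unfold phi
  rw [dif_pos hv, dif_neg hmem, subtype_sig Sᶜ _ hv (Finset.mem_compl.2 hmem),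
    OrderIso.symm_apply_apply, if_neg]
  show ¬ (Sᶜ.card - 1 + 1 < Sᶜ.card)
  omega

lemma phi_big {v : Fin (m+1)} (hv : ¬ ((v:ℕ) < m)) : phi S q1 q2 v = Fin.last m := by
  unfold phi
  rw [dif_neg hv]

lemma phi_rt : phi S q1 q2 (rt m) = rt m := by
  rw [phi_big (by simp [rt]), last_eq_rt]

/-- value of phi is never in the "wrong" range -/
lemma phi_H3_S (hq2 : IsAndreTree Sᶜ.card q2) (v : Fin (m+1))
    (h : phi S q1 q2 v ∈ Set.range (sig S)) :
    ∃ i : Fin S.card, (i:ℕ) + 1 < S.card ∧ v = sig S i := by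
  rcases tricho S v with rfl | ⟨i, rfl⟩ | ⟨i, rfl⟩
  · rw [phi_rt] at h
    exact (rt_not_mem_range S h).elim
  · by_cases hi : (i:ℕ) + 1 < S.card
    · exact ⟨i, hi, rfl⟩
    · obtain ⟨hA, htop⟩ := eq_top_of_not_lt hi
      rw [htop, phi_sig1_top hA, last_eq_rt] at h
      exact (rt_not_mem_range S h).elim
  · by_cases hi : (i:ℕ) + 1 < Sᶜ.card
    · rw [phi_sig2 i hi] at h
      exact (range_sig_disjoint S h ⟨q2 i, rfl⟩).elim
    · obtain ⟨hA, htop⟩ := eq_top_of_not_lt hi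
      rw [htop, phi_sig2_top hA, last_eq_rt] at h
      exact (rt_not_mem_range S h).elim

lemma phi_H3_T (hq1 : IsAndreTree S.card q1) (v : Fin (m+1))
    (h : phi S q1 q2 v ∈ Set.range (sig Sᶜ)) :
    ∃ i : Fin Sᶜ.card, (i:ℕ) + 1 < Sᶜ.card ∧ v = sig Sᶜ i := by
  rcases tricho S v with rfl | ⟨i, rfl⟩ | ⟨i, rfl⟩
  · rw [phi_rt] at h
    exact (rt_not_mem_range Sᶜ h).elim
  · by_cases hi : (i:ℕ) + 1 < S.card
    · rw [phi_sig1 i hi] at h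
      exact (range_sig_disjoint S ⟨q1 i, rfl⟩ h).elim
    · obtain ⟨hA, htop⟩ := eq_top_of_not_lt hi
      rw [htop, phi_sig1_top hA, last_eq_rt] at h
      exact (rt_not_mem_range Sᶜ h).elim
  · by_cases hi : (i:ℕ) + 1 < Sᶜ.card
    · exact ⟨i, hi, rfl⟩
    · obtain ⟨hA, htop⟩ := eq_top_of_not_lt hi
      rw [htop, phi_sig2_top hA, last_eq_rt] at h
      exact (rt_not_mem_range Sᶜ h).elim

lemma phi_isAndre (hm : 0 < m) (hS : (⟨m-1, by omega⟩ : Fin m) ∈ S)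
    (hq1 : IsAndreTree S.card q1) (hq2 : IsAndreTree Sᶜ.card q2) :
    IsAndreTree (m+1) (phi S q1 q2) := by
  have hA : 0 < S.card := Finset.card_pos.2 ⟨_, hS⟩
  refine ⟨?_, ?_, ?_⟩
  · intro v hv1
    have hv : (v:ℕ) < m := by omega
    rcases tricho S v with rfl | ⟨i, rfl⟩ | ⟨i, rfl⟩
    · simp [rt] at hv
    · by_cases hi : (i:ℕ) + 1 < S.card
      · rw [phi_sig1 i hi]
        have := hq1.1 i hi
        have h2 : sig S i < sig S (q1 i) := sig_strictMono S (by rwa [Fin.lt_def])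
        rwa [Fin.lt_def] at h2
      · obtain ⟨hA', htop⟩ := eq_top_of_not_lt hi
        rw [htop, phi_sig1_top hA']
        have := sig_lt S (topIdx S hA')
        rw [← htop]
        show (sig S i : ℕ) < (Fin.last m : ℕ)
        rw [htop]
        simpa using this
    · by_cases hi : (i:ℕ) + 1 < Sᶜ.card
      · rw [phi_sig2 i hi]
        have := hq2.1 i hi
        have h2 : sig Sᶜ i < sig Sᶜ (q2 i) := sig_strictMono Sᶜ (by rwa [Fin.lt_def])
        rwa [Fin.lt_def] at h2
      · obtain ⟨hA', htop⟩ := eq_top_of_not_lt hi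
        rw [htop, phi_sig2_top hA']
        have := sig_lt Sᶜ (topIdx Sᶜ hA')
        rw [← htop]
        show (sig Sᶜ i : ℕ) < (Fin.last m : ℕ)
        rw [htop]
        simpa using this
  · intro v hv1
    have hv : ¬ ((v:ℕ) < m) := by omega
    rw [phi_big hv, last_eq_rt, eq_rt_of_not_lt hv]
  · intro j
    rcases tricho S j with rfl | ⟨j', rfl⟩ | ⟨j', rfl⟩
    · -- children of the root
      set x0 : Fin (m+1) := if hT : 0 < Sᶜ.card then sig Sᶜ (topIdx Sᶜ hT) else sig S (topIdx S hA)
        with hx0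
      have hsub : (Finset.univ.filter fun v : Fin (m+1) => (v:ℕ)+1 < m+1 ∧ phi S q1 q2 v = rt m)
          ⊆ {sig S (topIdx S hA), x0} := by
        intro v hvmem
        rw [Finset.mem_filter] at hvmem
        obtain ⟨-, hv1, hveq⟩ := hvmem
        have hv : (v:ℕ) < m := by omega
        simp only [Finset.mem_insert, Finset.mem_singleton]
        rcases tricho S v with rfl | ⟨i, rfl⟩ | ⟨i, rfl⟩
        · simp [rt] at hv
        · by_cases hi : (i:ℕ) + 1 < S.card
          · rw [phi_sig1 i hi] at hveq
            have := sig_lt S (q1 i)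
            rw [hveq] at this
            simp [rt] at this
          · obtain ⟨hA', htop⟩ := eq_top_of_not_lt hi
            left
            rw [htop]
        · by_cases hi : (i:ℕ) + 1 < Sᶜ.card
          · rw [phi_sig2 i hi] at hveq
            have := sig_lt Sᶜ (q2 i)
            rw [hveq] at this
            simp [rt] at this
          · obtain ⟨hT, htop⟩ := eq_top_of_not_lt hi
            right
            rw [htop, hx0, dif_pos hT]
      calc (Finset.univ.filter fun v : Fin (m+1) => (v:ℕ)+1 < m+1 ∧ phi S q1 q2 v = rt m).card
          ≤ ({sig S (topIdx S hA), x0} : Finset (Fin (m+1))).card := Finset.card_le_card hsub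
        _ ≤ 2 := Finset.card_insert_le _ _ |>.trans (by simp)
    · -- children of sig S j'
      have hset : (Finset.univ.filter fun v : Fin (m+1) => (v:ℕ)+1 < m+1 ∧ phi S q1 q2 v = sig S j')
          = (Finset.univ.filter fun i : Fin S.card => (i:ℕ)+1 < S.card ∧ q1 i = j').map
            ⟨sig S, sig_inj S⟩ := by
        ext v
        simp only [Finset.mem_filter, Finset.mem_univ, true_and, Finset.mem_map,
          Function.Embedding.coeFn_mk]
        constructor
        · rintro ⟨hv1, hveq⟩
          obtain ⟨i, hi, rfl⟩ := phi_H3_S hq2 v ⟨j', hveq.symm⟩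
          rw [phi_sig1 i hi] at hveq
          exact ⟨i, ⟨hi, sig_inj S hveq⟩, rfl⟩
        · rintro ⟨i, ⟨hi, hq⟩, rfl⟩
          refine ⟨by have := sig_lt S i; omega, ?_⟩
          rw [phi_sig1 i hi, hq]
      rw [hset, Finset.card_map]
      exact hq1.2.2 j'
    · have hset : (Finset.univ.filter fun v : Fin (m+1) => (v:ℕ)+1 < m+1 ∧ phi S q1 q2 v = sig Sᶜ j')
          = (Finset.univ.filter fun i : Fin Sᶜ.card => (i:ℕ)+1 < Sᶜ.card ∧ q2 i = j').map
            ⟨sig Sᶜ, sig_inj Sᶜ⟩ := by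
        ext v
        simp only [Finset.mem_filter, Finset.mem_univ, true_and, Finset.mem_map,
          Function.Embedding.coeFn_mk]
        constructor
        · rintro ⟨hv1, hveq⟩
          obtain ⟨i, hi, rfl⟩ := phi_H3_T hq1 v ⟨j', hveq.symm⟩
          rw [phi_sig2 i hi] at hveq
          exact ⟨i, ⟨hi, sig_inj Sᶜ hveq⟩, rfl⟩
        · rintro ⟨i, ⟨hi, hq⟩, rfl⟩
          refine ⟨by have := sig_lt Sᶜ i; omega, ?_⟩
          rw [phi_sig2 i hi, hq]
      rw [hset, Finset.card_map]
      exact hq2.2.2 j'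

lemma Sset_phi (hm : 0 < m) (hS : (⟨m-1, by omega⟩ : Fin m) ∈ S)
    (hq1 : IsAndreTree S.card q1) (hq2 : IsAndreTree Sᶜ.card q2) :
    Sset (phi S q1 q2) = S := by
  have hA : 0 < S.card := Finset.card_pos.2 ⟨_, hS⟩
  have hell : sig S (topIdx S hA) = ell m := by
    exact sig_top_of_ell_mem hm hS
  ext u
  unfold Sset
  rw [Finset.mem_filter]
  simp only [Finset.mem_univ, true_and]
  constructor
  · intro hr
    by_contra humem
    have hmemc : Fin.castSucc u ∈ Set.range (sig Sᶜ) := by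
      rw [mem_range_sig]
      exact ⟨u.isLt, by rwa [show (⟨((Fin.castSucc u : Fin (m+1)) : ℕ), u.isLt⟩ : Fin m) = u from Fin.ext rfl, Finset.mem_compl]⟩
    obtain ⟨i, hi⟩ := hmemc
    obtain ⟨t, ht⟩ := hr
    rw [← hell] at ht
    rw [← hi] at ht
    have := T2 (sig_inj S) (phi_H3_S hq2) t _ _ ht
    exact range_sig_disjoint S this ⟨i, rfl⟩
  · intro humem
    have hmem : Fin.castSucc u ∈ Set.range (sig S) := by
      rw [mem_range_sig]
      exact ⟨u.isLt, by rwa [show (⟨((Fin.castSucc u : Fin (m+1)) : ℕ), u.isLt⟩ : Fin m) = u from Fin.ext rfl]⟩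
    obtain ⟨i, hi⟩ := hmem
    rw [← hi, ← hell]
    rw [T1 (sig_inj S) hq1 (fun i hi => phi_sig1 i hi) (phi_H3_S hq2) _ i]
    exact reach_root hq1 hA i

end Phi

section RoundTrip
variable {m : ℕ}

lemma indS_isAndre {p : Fin (m+1) → Fin (m+1)} (hm : 0 < m) (hp : IsAndreTree (m+1) p) :
    IsAndreTree (Sset p).card (ind (Sset p) p) := by
  apply ind_isAndre _ hp (H1S hm hp)
  intro hA
  rw [sig_Sset_top hm p hA, p_ell hm hp]
  simp [rt]

lemma indT_isAndre {p : Fin (m+1) → Fin (m+1)} (hm : 0 < m) (hp : IsAndreTree (m+1) p) :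
    IsAndreTree ((Sset p)ᶜ).card (ind (Sset p)ᶜ p) := by
  apply ind_isAndre _ hp (H1T hm hp)
  intro hA
  rw [p_top_compl hm hp hA]
  simp [rt]

lemma phi_ind {p : Fin (m+1) → Fin (m+1)} (hm : 0 < m) (hp : IsAndreTree (m+1) p) :
    phi (Sset p) (ind (Sset p) p) (ind (Sset p)ᶜ p) = p := by
  funext v
  rcases tricho (Sset p) v with rfl | ⟨i, rfl⟩ | ⟨i, rfl⟩
  · rw [phi_rt, p_rt hp]
  · by_cases hi : (i:ℕ) + 1 < (Sset p).card
    · rw [phi_sig1 i hi, (H1S hm hp i hi)]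
    · obtain ⟨hA, htop⟩ := eq_top_of_not_lt hi
      rw [htop, phi_sig1_top hA, sig_Sset_top hm p hA, p_ell hm hp, last_eq_rt]
  · by_cases hi : (i:ℕ) + 1 < ((Sset p)ᶜ).card
    · rw [phi_sig2 i hi, (H1T hm hp i hi)]
    · obtain ⟨hA, htop⟩ := eq_top_of_not_lt hi
      rw [htop, phi_sig2_top hA, p_top_compl hm hp hA, last_eq_rt]

variable {S : Finset (Fin m)} {q1 : Fin S.card → Fin S.card} {q2 : Fin Sᶜ.card → Fin Sᶜ.card}

lemma ind_phi1 (hq1 : IsAndreTree S.card q1) : ind S (phi S q1 q2) = q1 := by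
  funext i
  by_cases hi : (i:ℕ) + 1 < S.card
  · have hc : phi S q1 q2 (sig S i) = sig S (q1 i) := phi_sig1 i hi
    unfold ind
    simp only [hc]
    rw [dif_pos (sig_lt S (q1 i)), dif_pos (sig_mem S (q1 i) (sig_lt S (q1 i))),
      subtype_sig S (q1 i) (sig_lt S (q1 i)) _, OrderIso.symm_apply_apply]
  · obtain ⟨hA, htop⟩ := eq_top_of_not_lt hi
    have hc : phi S q1 q2 (sig S i) = Fin.last m := by rw [htop]; exact phi_sig1_top hA
    unfold ind
    simp only [hc]
    rw [dif_neg (by show ¬ ((Fin.last m : ℕ) < m); simp)]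
    exact (hq1.2.1 i hi).symm

lemma ind_phi2 (hq2 : IsAndreTree Sᶜ.card q2) : ind Sᶜ (phi S q1 q2) = q2 := by
  funext i
  by_cases hi : (i:ℕ) + 1 < Sᶜ.card
  · have hc : phi S q1 q2 (sig Sᶜ i) = sig Sᶜ (q2 i) := phi_sig2 i hi
    unfold ind
    simp only [hc]
    rw [dif_pos (sig_lt Sᶜ (q2 i)), dif_pos (sig_mem Sᶜ (q2 i) (sig_lt Sᶜ (q2 i))),
      subtype_sig Sᶜ (q2 i) (sig_lt Sᶜ (q2 i)) _, OrderIso.symm_apply_apply]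
  · obtain ⟨hA, htop⟩ := eq_top_of_not_lt hi
    have hc : phi S q1 q2 (sig Sᶜ i) = Fin.last m := by rw [htop]; exact phi_sig2_top hA
    unfold ind
    simp only [hc]
    rw [dif_neg (by show ¬ ((Fin.last m : ℕ) < m); simp)]
    exact (hq2.2.1 i hi).symm

end RoundTrip

noncomputable def wA (n : ℕ) (p : Fin n → Fin n) : ℕ := ∏ v ∈ internalsA n p, (hookA n p v + 1)
noncomputable def aA (n : ℕ) : ℕ := ∑ p ∈ andreTrees n, wA n p

lemma mem_andreTrees {n : ℕ} {p : Fin n → Fin n} : p ∈ andreTrees n ↔ IsAndreTree n p := by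
  unfold andreTrees
  rw [Finset.mem_filter]
  simp

section Assemble
variable {m : ℕ}

lemma fiber_eq (hm : 0 < m) (S : Finset (Fin m)) (hS : (⟨m-1, by omega⟩ : Fin m) ∈ S) :
    ∑ p ∈ (andreTrees (m+1)).filter (fun p => Sset p = S), wA (m+1) p
      = (m+2) * aA S.card * aA Sᶜ.card := by
  have hrhs : ∑ x ∈ (andreTrees S.card) ×ˢ (andreTrees Sᶜ.card),
      ((m+2) * wA S.card x.1 * wA Sᶜ.card x.2)
      = (m+2) * aA S.card * aA Sᶜ.card := by
    rw [Finset.sum_product]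
    have key : (m+2) * aA S.card * aA Sᶜ.card = (m+2) * (aA S.card * aA Sᶜ.card) := by ring
    rw [key]
    unfold aA
    rw [Finset.sum_mul_sum, Finset.mul_sum]
    refine Finset.sum_congr rfl fun q1 _ => ?_
    rw [Finset.mul_sum]
    refine Finset.sum_congr rfl fun q2 _ => ?_
    ring
  rw [← hrhs]
  apply Finset.sum_nbij' (fun p => (ind S p, ind Sᶜ p)) (fun x => phi S x.1 x.2)
  · intro p hp
    rw [Finset.mem_filter] at hp
    obtain ⟨hp1, hfib⟩ := hp
    rw [mem_andreTrees] at hp1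
    subst hfib
    rw [Finset.mem_product, mem_andreTrees, mem_andreTrees]
    exact ⟨indS_isAndre hm hp1, indT_isAndre hm hp1⟩
  · intro x hx
    rw [Finset.mem_product, mem_andreTrees, mem_andreTrees] at hx
    rw [Finset.mem_filter, mem_andreTrees]
    exact ⟨phi_isAndre hm hS hx.1 hx.2, Sset_phi hm hS hx.1 hx.2⟩
  · intro p hp
    rw [Finset.mem_filter] at hp
    obtain ⟨hp1, hfib⟩ := hp
    rw [mem_andreTrees] at hp1
    subst hfib
    exact phi_ind hm hp1
  · intro x hx
    rw [Finset.mem_product, mem_andreTrees, mem_andreTrees] at hx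
    exact Prod.ext (ind_phi1 hx.1) (ind_phi2 hx.2)
  · intro p hp
    rw [Finset.mem_filter] at hp
    obtain ⟨hp1, hfib⟩ := hp
    rw [mem_andreTrees] at hp1
    subst hfib
    exact weight_decomp hm hp1

lemma step1 (hm : 0 < m) :
    ∑ p ∈ andreTrees (m+1), wA (m+1) p
      = ∑ S ∈ (Finset.univ : Finset (Fin m)).powerset.filter
          (fun S => (⟨m-1, by omega⟩ : Fin m) ∈ S),
        ((m+2) * aA S.card * aA (m - S.card)) := by
  have hmaps : ∀ p ∈ andreTrees (m+1), Sset p ∈ (Finset.univ : Finset (Fin m)).powerset.filter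
      (fun S => (⟨m-1, by omega⟩ : Fin m) ∈ S) := by
    intro p _
    rw [Finset.mem_filter, Finset.mem_powerset]
    exact ⟨Finset.subset_univ _, ellm_mem hm p⟩
  rw [← Finset.sum_fiberwise_of_maps_to hmaps (wA (m+1))]
  apply Finset.sum_congr rfl
  intro S hSmem
  rw [Finset.mem_filter] at hSmem
  rw [fiber_eq hm S hSmem.2]
  congr 2
  rw [Finset.card_compl]
  simp

lemma step2 (hm : 0 < m) (f : ℕ → ℕ) :
    ∑ S ∈ (Finset.univ : Finset (Fin m)).powerset.filter
        (fun S => (⟨m-1, by omega⟩ : Fin m) ∈ S), f S.card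
      = ∑ j ∈ Finset.range m, (m-1).choose j * f (j+1) := by
  set ℓ : Fin m := ⟨m-1, by omega⟩ with hℓ
  set E := (Finset.univ : Finset (Fin m)).erase ℓ with hE
  have hstep : ∑ S ∈ (Finset.univ : Finset (Fin m)).powerset.filter (fun S => ℓ ∈ S), f S.card
      = ∑ T ∈ E.powerset, f (T.card + 1) := by
    apply Finset.sum_nbij' (fun S => S.erase ℓ) (fun T => insert ℓ T)
    · intro S hSm
      rw [Finset.mem_filter] at hSm
      rw [Finset.mem_powerset, hE]
      exact Finset.erase_subset_erase ℓ (Finset.subset_univ S)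
    · intro T hT
      rw [Finset.mem_powerset, hE] at hT
      rw [Finset.mem_filter, Finset.mem_powerset]
      exact ⟨Finset.subset_univ _, Finset.mem_insert_self _ _⟩
    · intro S hSm
      rw [Finset.mem_filter] at hSm
      exact Finset.insert_erase hSm.2
    · intro T hT
      rw [Finset.mem_powerset, hE] at hT
      apply Finset.erase_insert
      intro hcon
      exact (Finset.notMem_erase ℓ _) (hT hcon)
    · intro S hSm
      rw [Finset.mem_filter] at hSm
      rw [Finset.card_erase_of_mem hSm.2]
      congr 1
      have : 0 < S.card := Finset.card_pos.2 ⟨ℓ, hSm.2⟩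
      omega
  rw [hstep]
  rw [Finset.sum_powerset_apply_card (fun c => f (c+1))]
  have hEcard : E.card = m - 1 := by
    rw [hE, Finset.card_erase_of_mem (Finset.mem_univ _)]
    simp
  rw [hEcard]
  rw [show m - 1 + 1 = m by omega]
  apply Finset.sum_congr rfl
  intro j _
  rw [smul_eq_mul]

end Assemble

lemma aA_zero : aA 0 = 1 := by
  unfold aA
  have h1 : andreTrees 0 = Finset.univ := by
    apply Finset.eq_univ_of_forall
    intro p
    rw [mem_andreTrees]
    exact ⟨fun i => absurd i.isLt (by omega), fun i => absurd i.isLt (by omega),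
      fun j => absurd j.isLt (by omega)⟩
  rw [h1]
  have h2 : ∀ p : Fin 0 → Fin 0, wA 0 p = 1 := by
    intro p
    unfold wA
    rw [show internalsA 0 p = ∅ from Finset.eq_empty_of_forall_notMem (fun v _ => absurd v.isLt (by omega))]
    simp
  rw [Finset.sum_congr rfl (fun p _ => h2 p)]
  simp

lemma aA_one : aA 1 = 1 := by
  unfold aA
  have h1 : andreTrees 1 = Finset.univ := by
    apply Finset.eq_univ_of_forall
    intro p
    rw [mem_andreTrees]
    refine ⟨fun i hi => ?_, fun i _ => ?_, fun j => ?_⟩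
    · have := i.isLt; omega
    · exact Subsingleton.elim _ _
    · have : (Finset.univ.filter fun i : Fin 1 => (i:ℕ)+1 < 1 ∧ p i = j) = ∅ := by
        apply Finset.eq_empty_of_forall_notMem
        intro i hi
        rw [Finset.mem_filter] at hi
        have := i.isLt
        omega
      rw [this]
      simp
  rw [h1]
  have h2 : ∀ p : Fin 1 → Fin 1, wA 1 p = 1 := by
    intro p
    unfold wA
    have : internalsA 1 p = ∅ := by
      apply Finset.eq_empty_of_forall_notMem
      intro v hv
      unfold internalsA at hv
      rw [Finset.mem_filter] at hv
      have hle : hookA 1 p v ≤ 1 := by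
        unfold hookA
        exact le_trans (Finset.card_le_card (Finset.filter_subset _ _)) (by simp)
      omega
    rw [this]
    simp
  rw [Finset.sum_congr rfl (fun p _ => h2 p)]
  simp


lemma aA_closed : ∀ n : ℕ, aA n = (n+1)^(n-1) := by
  intro n
  induction n using Nat.strong_induction_on with
  | _ n ih =>
    rcases n with _ | _ | k
    · simpa using aA_zero
    · simpa using aA_one
    set m := k + 1 with hmdef
    have hm : 0 < m := by omega
    have h1 : aA (m+1) = ∑ S ∈ (Finset.univ : Finset (Fin m)).powerset.filter
          (fun S => (⟨m-1, by omega⟩ : Fin m) ∈ S),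
        ((m+2) * aA S.card * aA (m - S.card)) := step1 hm
    rw [h1, step2 hm (fun c => (m+2) * aA c * aA (m - c))]
    have h2 : ∀ j ∈ Finset.range m,
        (m-1).choose j * ((m+2) * aA (j+1) * aA (m - (j+1)))
        = (m+2) * ((m-1).choose j * (j+2)^j * ((m-1)-j+1)^((m-1)-j-1)) := by
      intro j hj
      rw [Finset.mem_range] at hj
      have e1 : aA (j+1) = (j+2)^j := by
        have := ih (j+1) (by omega)
        simpa using this
      have e2 : aA (m - (j+1)) = ((m-1)-j+1)^((m-1)-j-1) := by
        have := ih (m - (j+1)) (by omega)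
        rw [this]
        congr 1 <;> omega
      rw [e1, e2]
      ring
    rw [Finset.sum_congr rfl h2, ← Finset.mul_sum]
    have h3 : ∑ j ∈ Finset.range m, ((m-1).choose j * (j+2)^j * ((m-1)-j+1)^((m-1)-j-1))
        = (m+2)^(m-1) := by
      have := abel_nat (m-1)
      rw [show m - 1 + 1 = m by omega] at this
      rw [this, show m - 1 + 3 = m + 2 by omega]
    rw [h3, ← pow_succ']
    rw [show m - 1 + 1 = m by omega, show m + 1 - 1 = m from rfl, show m+1+1 = m+2 by omega]


end AndreAux

/-- `Σ_{T ∈ 𝒜_n} ∏_{v internal} (h_v + 1) = (n+1)^(n-1)`, the sum being over all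
André trees on `n` vertices. -/
theorem stmt5 (n : ℕ) (hn : 1 ≤ n) :
    ∑ p ∈ andreTrees n, ∏ v ∈ internalsA n p, (hookA n p v + 1)
      = (n + 1) ^ (n - 1) := by
  have h := AndreAux.aA_closed n
  unfold AndreAux.aA AndreAux.wA at h
  exact h
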